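/- Let m, d be natural numbers, E > 0, cᵢ > 0 and xᵢ > 0 for i = 1, …, m, bᵢ ∈ ℝ^d, and let p ∈ ℝ^d lie in the linear span of {b₁, …, b_m}. Set K = Σ_{i=1}^m (E/cᵢ) xᵢ bᵢ bᵢᵀ. Then there exists q* ∈ ℝ^m with Σ_{i=1}^m q*ᵢ bᵢ = p such that: (i) for every u ∈ ℝ^d, 2⟨p, u⟩ − ⟨u, K u⟩ ≤ Σ_{i=1}^m (cᵢ/(E xᵢ)) (q*ᵢ)²; (ii) for every q ∈ ℝ^m with Σ_{i=1}^m qᵢ bᵢ = p, Σ_{i=1}^m (cᵢ/(E xᵢ)) (q*ᵢ)² ≤ Σ_{i=1}^m (cᵢ/(E xᵢ)) qᵢ²; and (iii) there exists u* ∈ ℝ^d with 2⟨p, u*⟩ − ⟨u*, K u*⟩ = Σ_{i=1}^m (cᵢ/(E xᵢ)) (q*ᵢ)². In particular, the compliance sup{2pᵀu − uᵀKu : u ∈ ℝ^d} equals the minimum of Σ_{i=1}^m (cᵢ/(E xᵢ)) qᵢ² over all axial-force vectors q satisfying the equilibrium condition Σ qᵢ bᵢ = p, and both optimal values are attained. 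-/

import Mathlib

open Matrix

/-- Equivalence of the compliance and its complementary-energy (SOCP)
reformulation: there is an equilibrium force vector `q*` with
`Σ qᵢ* bᵢ = p` such that the complementary energy at `q*` upper-bounds
`2⟨p,u⟩ − ⟨u,Ku⟩` for all `u`, is minimal among all equilibrium force vectors,
and is attained by some displacement `u*`. -/
theorem compliance_eq_min_complementary_energy (m d : ℕ)
    (E : ℝ) (hE : 0 < E) (c x : Fin m → ℝ)
    (hc : ∀ i, 0 < c i) (hx : ∀ i, 0 < x i)
    (b : Fin m → Fin d → ℝ) (p : Fin d → ℝ)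
    (hp : p ∈ Submodule.span ℝ (Set.range b))
    (K : Matrix (Fin d) (Fin d) ℝ)
    (hK : K = ∑ i, (E / c i * x i) • Matrix.vecMulVec (b i) (b i)) :
    ∃ qstar : Fin m → ℝ,
      (∑ i, qstar i • b i) = p ∧
      (∀ u : Fin d → ℝ,
        2 * (p ⬝ᵥ u) - u ⬝ᵥ K.mulVec u
          ≤ ∑ i, c i / (E * x i) * qstar i ^ 2) ∧
      (∀ q : Fin m → ℝ, (∑ i, q i • b i) = p →
        ∑ i, c i / (E * x i) * qstar i ^ 2
          ≤ ∑ i, c i / (E * x i) * q i ^ 2) ∧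
      (∃ ustar : Fin d → ℝ,
        2 * (p ⬝ᵥ ustar) - ustar ⬝ᵥ K.mulVec ustar
          = ∑ i, c i / (E * x i) * qstar i ^ 2) := by
  classical
  set α : Fin m → ℝ := fun i => E / c i * x i with hα
  have hα0 : ∀ i, 0 < α i := fun i => mul_pos (div_pos hE (hc i)) (hx i)
  -- dot product of a vector with a finite sum
  have hds : ∀ (v : Fin d → ℝ) (f : Fin m → Fin d → ℝ),
      v ⬝ᵥ (∑ i, f i) = ∑ i, v ⬝ᵥ f i := by
    intro v f
    simp only [dotProduct, Finset.sum_apply, Finset.mul_sum]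
    exact Finset.sum_comm
  -- mulVec formula
  have hmul : ∀ u : Fin d → ℝ, K.mulVec u = ∑ i, (α i * (b i ⬝ᵥ u)) • b i := by
    intro u
    subst hK
    ext j
    simp only [Matrix.mulVec, dotProduct, Matrix.vecMulVec, Matrix.sum_apply,
      Matrix.smul_apply, Matrix.of_apply, smul_eq_mul, Finset.sum_apply, Pi.smul_apply,
      Finset.sum_mul, Finset.mul_sum]
    rw [Finset.sum_comm]
    exact Finset.sum_congr rfl fun i _ => Finset.sum_congr rfl fun k _ => by ring
  -- bilinear form formula
  have hbil : ∀ v w : Fin d → ℝ, v ⬝ᵥ K.mulVec w = ∑ i, α i * (b i ⬝ᵥ v) * (b i ⬝ᵥ w) := by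
    intro v w
    rw [hmul w, hds]
    refine Finset.sum_congr rfl fun i _ => ?_
    rw [dotProduct_smul, smul_eq_mul, dotProduct_comm v (b i)]
    ring
  -- dot product of equilibrium sum
  have hsum_dot : ∀ (q : Fin m → ℝ) (u : Fin d → ℝ),
      (∑ i, q i • b i) ⬝ᵥ u = ∑ i, q i * (b i ⬝ᵥ u) := by
    intro q u
    rw [dotProduct_comm, hds]
    refine Finset.sum_congr rfl fun i _ => ?_
    rw [dotProduct_smul, smul_eq_mul, dotProduct_comm]
  -- existence of ustar with K ustar = p
  obtain ⟨ustar, hustar⟩ : ∃ u : Fin d → ℝ, K.mulVec u = p := by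
    let T : EuclideanSpace ℝ (Fin d) →ₗ[ℝ] EuclideanSpace ℝ (Fin d) := Matrix.toEuclideanLin K
    let U : Submodule ℝ (EuclideanSpace ℝ (Fin d)) :=
      Submodule.span ℝ (Set.range (fun i => WithLp.toLp 2 (b i)))
    have hinner : ∀ v w : EuclideanSpace ℝ (Fin d),
        (inner ℝ v w : ℝ) = WithLp.ofLp v ⬝ᵥ WithLp.ofLp w := by
      intro v w
      simp [PiLp.inner_apply, dotProduct, mul_comm]
    have hbU : ∀ i, WithLp.toLp 2 (b i) ∈ U :=
      fun i => Submodule.subset_span ⟨i, rfl⟩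
    have hT : ∀ u, T u = WithLp.toLp 2 (K.mulVec (WithLp.ofLp u)) := fun u => rfl
    have hker : LinearMap.ker T = Uᗮ := by
      ext u
      simp only [LinearMap.mem_ker, Submodule.mem_orthogonal]
      constructor
      · intro hu v hv
        have h0 : (0 : ℝ) = ∑ i, α i * (b i ⬝ᵥ WithLp.ofLp u) * (b i ⬝ᵥ WithLp.ofLp u) := by
          rw [← hbil]
          have h1 : K.mulVec (WithLp.ofLp u) = 0 := by
            rw [hT] at hu
            simpa using congrArg WithLp.ofLp hu
          rw [h1, dotProduct_zero]
        have hbi : ∀ i : Fin m, b i ⬝ᵥ WithLp.ofLp u = 0 := by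
          intro i
          have hterm := (Finset.sum_eq_zero_iff_of_nonneg
            (fun i _ => by nlinarith [sq_nonneg (b i ⬝ᵥ WithLp.ofLp u), (hα0 i).le] :
              ∀ i ∈ Finset.univ, (0:ℝ) ≤ α i * (b i ⬝ᵥ WithLp.ofLp u) * (b i ⬝ᵥ WithLp.ofLp u))).mp
            h0.symm i (Finset.mem_univ i)
          rcases mul_eq_zero.mp hterm with h | h
          · rcases mul_eq_zero.mp h with h' | h'
            · exact absurd h' (hα0 i).ne'
            · exact h'
          · exact h
        have hsub : U ≤ LinearMap.ker ((innerSL ℝ u : EuclideanSpace ℝ (Fin d) →L[ℝ] ℝ) : EuclideanSpace ℝ (Fin d) →ₗ[ℝ] ℝ) := by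
          rw [Submodule.span_le]
          rintro v ⟨i, rfl⟩
          simp only [SetLike.mem_coe, LinearMap.mem_ker, ContinuousLinearMap.coe_coe,
            innerSL_apply_apply]
          rw [real_inner_comm, hinner]
          exact hbi i
        have h2 := hsub hv
        simp only [LinearMap.mem_ker, ContinuousLinearMap.coe_coe, innerSL_apply_apply] at h2
        rw [real_inner_comm] at h2
        exact h2
      · intro hu
        have hbi : ∀ i : Fin m, b i ⬝ᵥ WithLp.ofLp u = 0 := by
          intro i
          have h3 := hu _ (hbU i)
          rwa [hinner] at h3
        have h4 : K.mulVec (WithLp.ofLp u) = 0 := by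
          rw [hmul]
          exact Finset.sum_eq_zero fun i _ => by rw [hbi i, mul_zero, zero_smul]
        rw [hT, h4]
        rfl
    have hrange : LinearMap.range T = U := by
      have hle : LinearMap.range T ≤ U := by
        rintro v ⟨u, rfl⟩
        rw [hT, hmul, ← WithLp.coe_symm_linearEquiv 2 ℝ, map_sum]
        exact Submodule.sum_mem _ fun i _ => by
          rw [map_smul]; exact Submodule.smul_mem _ _ (hbU i)
      refine Submodule.eq_of_le_of_finrank_eq hle ?_
      have h1 := LinearMap.finrank_range_add_finrank_ker T
      have h2 := Submodule.finrank_add_finrank_orthogonal U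
      rw [hker] at h1
      omega
    have hpU : WithLp.toLp 2 p ∈ LinearMap.range T := by
      rw [hrange]
      have := Submodule.mem_map_of_mem
        (f := (WithLp.linearEquiv 2 ℝ (Fin d → ℝ)).symm.toLinearMap) hp
      rw [← Submodule.span_image, ← Set.range_comp] at this
      exact this
    obtain ⟨u, hu⟩ := hpU
    refine ⟨WithLp.ofLp u, ?_⟩
    rw [hT] at hu
    simpa using congrArg WithLp.ofLp hu
  -- key scalar identities
  have hcq : ∀ i, c i / (E * x i) * (α i * (b i ⬝ᵥ ustar)) = b i ⬝ᵥ ustar := by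
    intro i
    have h1 := (hc i).ne'; have h2 := hE.ne'; have h3 := (hx i).ne'
    simp only [hα]
    field_simp
  have hS : ∑ i, c i / (E * x i) * (α i * (b i ⬝ᵥ ustar)) ^ 2
      = ∑ i, α i * (b i ⬝ᵥ ustar) * (b i ⬝ᵥ ustar) := by
    refine Finset.sum_congr rfl fun i _ => ?_
    rw [sq, ← mul_assoc, hcq i]
    ring
  have hpu : p ⬝ᵥ ustar = ∑ i, α i * (b i ⬝ᵥ ustar) * (b i ⬝ᵥ ustar) := by
    conv_lhs => rw [← hustar]
    rw [dotProduct_comm, hbil]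
  refine ⟨fun i => α i * (b i ⬝ᵥ ustar), ?_, ?_, ?_, ?_⟩
  · show (∑ i, (α i * (b i ⬝ᵥ ustar)) • b i) = p
    rw [← hmul]; exact hustar
  · intro u
    show 2 * (p ⬝ᵥ u) - u ⬝ᵥ K.mulVec u
        ≤ ∑ i, c i / (E * x i) * (α i * (b i ⬝ᵥ ustar)) ^ 2
    have hpu' : p ⬝ᵥ u = ∑ i, α i * (b i ⬝ᵥ ustar) * (b i ⬝ᵥ u) := by
      conv_lhs => rw [← hustar]
      rw [dotProduct_comm, hbil]
      exact Finset.sum_congr rfl fun i _ => by ring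
    have key : (0:ℝ) ≤ ∑ i, α i * ((b i ⬝ᵥ u) - (b i ⬝ᵥ ustar)) ^ 2 :=
      Finset.sum_nonneg fun i _ => mul_nonneg (hα0 i).le (sq_nonneg _)
    have hexp : ∑ i, α i * ((b i ⬝ᵥ u) - (b i ⬝ᵥ ustar)) ^ 2
        = (∑ i, α i * (b i ⬝ᵥ u) * (b i ⬝ᵥ u))
          - 2 * (∑ i, α i * (b i ⬝ᵥ ustar) * (b i ⬝ᵥ u))
          + ∑ i, α i * (b i ⬝ᵥ ustar) * (b i ⬝ᵥ ustar) := by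
      rw [Finset.mul_sum, ← Finset.sum_sub_distrib, ← Finset.sum_add_distrib]
      exact Finset.sum_congr rfl fun i _ => by ring
    rw [hS, hpu', hbil u u]
    linarith
  · intro q hq
    show ∑ i, c i / (E * x i) * (α i * (b i ⬝ᵥ ustar)) ^ 2
        ≤ ∑ i, c i / (E * x i) * q i ^ 2
    have hq' : ∑ i, q i * (b i ⬝ᵥ ustar) = p ⬝ᵥ ustar := by
      rw [← hq, hsum_dot]
    have hcross : ∑ i, c i / (E * x i) * q i * (α i * (b i ⬝ᵥ ustar))
        = ∑ i, q i * (b i ⬝ᵥ ustar) := by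
      refine Finset.sum_congr rfl fun i _ => ?_
      rw [show c i / (E * x i) * q i * (α i * (b i ⬝ᵥ ustar))
          = q i * (c i / (E * x i) * (α i * (b i ⬝ᵥ ustar))) from by ring, hcq i]
    have key : (0:ℝ) ≤ ∑ i, c i / (E * x i) * (q i - α i * (b i ⬝ᵥ ustar)) ^ 2 :=
      Finset.sum_nonneg fun i _ =>
        mul_nonneg (div_nonneg (hc i).le (mul_nonneg hE.le (hx i).le)) (sq_nonneg _)
    have hexp : ∑ i, c i / (E * x i) * (q i - α i * (b i ⬝ᵥ ustar)) ^ 2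
        = (∑ i, c i / (E * x i) * q i ^ 2)
          - 2 * (∑ i, c i / (E * x i) * q i * (α i * (b i ⬝ᵥ ustar)))
          + ∑ i, c i / (E * x i) * (α i * (b i ⬝ᵥ ustar)) ^ 2 := by
      rw [Finset.mul_sum, ← Finset.sum_sub_distrib, ← Finset.sum_add_distrib]
      exact Finset.sum_congr rfl fun i _ => by ring
    rw [hS] at *
    linarith [hexp, key, hcross, hq', hpu]
  · refine ⟨ustar, ?_⟩
    show 2 * (p ⬝ᵥ ustar) - ustar ⬝ᵥ K.mulVec ustar
        = ∑ i, c i / (E * x i) * (α i * (b i ⬝ᵥ ustar)) ^ 2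
    rw [hS, hpu, hbil ustar ustar]
    ring
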